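/- A list (b_1,…,b_r) of integers with every b_i ≥ 2 is a T-chain if and only if it can be obtained from one of the lists (4) or (3,2,…,2,3) (with k ≥ 0 intermediate entries equal to 2) by finitely many applications of the two operations (b_1,…,b_r) ↦ (b_1+1, b_2,…,b_r, 2) and (b_1,…,b_r) ↦ (2, b_1,…,b_{r−1}, b_r+1). Moreover, if the T-chain has Hirzebruch–Jung continued fraction dn²/(dna−1) with d ≥ 1 and 0 < a < n coprime, then the starting list can be taken to be (4) if d = 1 and (3,2,…,2,3) with exactly d−2 twos if d ≥ 2. -/

import Mathlib

/-- Hirzebruch–Jung continued fraction: `hjcf [b₁,…,b_r] = b₁ - 1/(b₂ - 1/(⋯ - 1/b_r))`.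
(With the convention `hjcf [] = 0`, so that `hjcf [b] = b` since `1/0 = 0`.) -/
def hjcf : List ℚ → ℚ
  | [] => 0
  | b :: l => b - 1 / hjcf l

/-- Hirzebruch–Jung continued fraction of a list of integers. -/
def hjcfZ (b : List ℤ) : ℚ := hjcf (b.map (fun x => (x : ℚ)))

/-- `b` is a T-chain: all entries are at least `2` and its Hirzebruch–Jung continued fraction
is `dn²/(dna−1)` for some `d ≥ 1` and coprime `0 < a < n`. -/
def IsTChain (b : List ℤ) : Prop :=
  (∀ x ∈ b, 2 ≤ x) ∧
    ∃ d n a : ℤ, 1 ≤ d ∧ 0 < a ∧ a < n ∧ Int.gcd a n = 1 ∧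
      hjcfZ b = ((d * n ^ 2 : ℤ) : ℚ) / ((d * n * a - 1 : ℤ) : ℚ)

/-- The operation `(b₁,…,b_r) ↦ (b₁+1, b₂,…,b_r, 2)`. -/
def addLeft (b : List ℤ) : List ℤ := b.modifyHead (· + 1) ++ [2]

/-- The operation `(b₁,…,b_r) ↦ (2, b₁,…,b_{r-1}, b_r+1)`. -/
def addRight (b : List ℤ) : List ℤ := 2 :: (b.reverse.modifyHead (· + 1)).reverse

/-- One application of either of the two T-chain extension operations. -/
def tStep (x y : List ℤ) : Prop := y = addLeft x ∨ y = addRight x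


/-- The 2×2 matrix `(p, u, q, v)` = `[[p,u],[q,v]]` attached to a continued fraction. -/
def mat : List ℤ → ℤ × ℤ × ℤ × ℤ
  | [] => (1, 0, 0, 1)
  | b :: l =>
    (b * (mat l).1 - (mat l).2.2.1, b * (mat l).2.1 - (mat l).2.2.2, (mat l).1, (mat l).2.1)

@[simp] lemma mat_nil : mat [] = (1, 0, 0, 1) := rfl

lemma mat_cons (b : ℤ) (l : List ℤ) :
    mat (b :: l) =
      (b * (mat l).1 - (mat l).2.2.1, b * (mat l).2.1 - (mat l).2.2.2, (mat l).1, (mat l).2.1) :=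
  rfl

@[simp] lemma mat_cons_1 (b : ℤ) (l : List ℤ) :
    (mat (b :: l)).1 = b * (mat l).1 - (mat l).2.2.1 := rfl
@[simp] lemma mat_cons_2 (b : ℤ) (l : List ℤ) :
    (mat (b :: l)).2.1 = b * (mat l).2.1 - (mat l).2.2.2 := rfl
@[simp] lemma mat_cons_3 (b : ℤ) (l : List ℤ) : (mat (b :: l)).2.2.1 = (mat l).1 := rfl
@[simp] lemma mat_cons_4 (b : ℤ) (l : List ℤ) : (mat (b :: l)).2.2.2 = (mat l).2.1 := rfl

def matMul (A B : ℤ × ℤ × ℤ × ℤ) : ℤ × ℤ × ℤ × ℤ :=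
  (A.1 * B.1 + A.2.1 * B.2.2.1, A.1 * B.2.1 + A.2.1 * B.2.2.2,
   A.2.2.1 * B.1 + A.2.2.2 * B.2.2.1, A.2.2.1 * B.2.1 + A.2.2.2 * B.2.2.2)

lemma mat_append (l₁ l₂ : List ℤ) : mat (l₁ ++ l₂) = matMul (mat l₁) (mat l₂) := by
  induction l₁ with
  | nil => simp [matMul]
  | cons b l ih =>
    simp only [List.cons_append, mat_cons, ih, matMul]
    ring_nf

lemma mat_det (l : List ℤ) : (mat l).1 * (mat l).2.2.2 - (mat l).2.2.1 * (mat l).2.1 = 1 := by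
  induction l with
  | nil => simp
  | cons b l ih => simp only [mat_cons]; nlinarith [ih]

lemma mat_singleton (b : ℤ) : mat [b] = (b, -1, 1, 0) := by simp [mat_cons]

lemma mat_reverse (l : List ℤ) :
    mat l.reverse = ((mat l).1, -(mat l).2.2.1, -(mat l).2.1, (mat l).2.2.2) := by
  induction l with
  | nil => simp
  | cons b l ih =>
    rw [List.reverse_cons, mat_append, ih, mat_singleton, mat_cons, matMul]
    have := mat_det l
    refine Prod.ext ?_ (Prod.ext ?_ (Prod.ext ?_ ?_)) <;> simp <;> ring

/-- Positivity facts for nonempty lists with entries ≥ 2. -/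
lemma mat_pos : ∀ (l : List ℤ), l ≠ [] → (∀ x ∈ l, 2 ≤ x) →
    1 ≤ (mat l).2.2.1 ∧ (mat l).2.2.1 < (mat l).1 ∧ (mat l).2.1 < (mat l).2.2.2 ∧
      (mat l).2.2.2 ≤ 0
  | [], h, _ => absurd rfl h
  | [b], _, h2 => by
      have hb := h2 b (by simp)
      rw [mat_singleton b]
      dsimp only
      refine ⟨by norm_num, by omega, by norm_num, by norm_num⟩
  | b :: c :: l, _, h2 => by
      have ih := mat_pos (c :: l) (by simp) (fun x hx => h2 x (List.mem_cons_of_mem _ hx))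
      have hb : 2 ≤ b := h2 b (by simp)
      rw [mat_cons b (c :: l)]
      dsimp only
      obtain ⟨h1, h2', h3, h4⟩ := ih
      refine ⟨by omega, by nlinarith, by nlinarith, by omega⟩

lemma mat_bounds (l : List ℤ) (h2 : ∀ x ∈ l, 2 ≤ x) :
    1 ≤ (mat l).1 ∧ 0 ≤ (mat l).2.2.1 ∧ (mat l).2.2.1 < (mat l).1 := by
  rcases eq_or_ne l [] with rfl | hne
  · simp
  · obtain ⟨h1, h2', _, _⟩ := mat_pos l hne h2
    exact ⟨by omega, by omega, h2'⟩

lemma hjcf_eq_mat : ∀ (l : List ℤ), l ≠ [] → (∀ x ∈ l, 2 ≤ x) →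
    hjcfZ l = ((mat l).1 : ℚ) / ((mat l).2.2.1 : ℚ)
  | [], h, _ => absurd rfl h
  | [b], _, _ => by simp [hjcfZ, hjcf, mat_singleton]
  | b :: c :: l, _, h2 => by
      have ih := hjcf_eq_mat (c :: l) (by simp) (fun x hx => h2 x (List.mem_cons_of_mem _ hx))
      obtain ⟨h1, h2', h3, h4⟩ := mat_pos (c :: l) (by simp)
        (fun x hx => h2 x (List.mem_cons_of_mem _ hx))
      have hstep : hjcfZ (b :: c :: l) = b - 1 / hjcfZ (c :: l) := by simp [hjcfZ, hjcf]
      rw [mat_cons b (c :: l)]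
      generalize hM : mat (c :: l) = M at ih h1 h2'
      obtain ⟨p, u, q, v⟩ := M
      dsimp only at ih h1 h2' ⊢
      have hp : (0:ℚ) < (p:ℚ) := by exact_mod_cast (by omega : (0:ℤ) < p)
      have hq : (0:ℚ) < (q:ℚ) := by exact_mod_cast (by omega : (0:ℤ) < q)
      rw [hstep, ih, one_div_div]
      push_cast
      field_simp

def TMat (d n a : ℤ) : ℤ × ℤ × ℤ × ℤ :=
  (d * n ^ 2, -(d * n * (n - a) - 1), d * n * a - 1, 1 - d * a * (n - a))

lemma coprime_T (d n a : ℤ) : IsCoprime (d * n ^ 2) (d * n * a - 1) :=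
  ⟨d * a ^ 2, -(d * n * a + 1), by ring⟩

lemma frac_eq {p q P Q : ℤ} (hq : 0 < q) (hQ : 0 < Q) (hc : IsCoprime p q)
    (hC : IsCoprime P Q) (h : (p : ℚ) / q = (P : ℚ) / Q) : p = P ∧ q = Q := by
  have hq' : (q : ℚ) ≠ 0 := by exact_mod_cast hq.ne'
  have hQ' : (Q : ℚ) ≠ 0 := by exact_mod_cast hQ.ne'
  rw [div_eq_div_iff hq' hQ'] at h
  have hZ : p * Q = P * q := by exact_mod_cast h
  have h1 : q ∣ Q := by
    refine (IsCoprime.symm hc).dvd_of_dvd_mul_left ?_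
    exact ⟨P, by linarith [hZ]⟩
  have h2 : Q ∣ q := by
    refine (IsCoprime.symm hC).dvd_of_dvd_mul_left ?_
    exact ⟨p, by linarith [hZ]⟩
  have hqQ : q = Q := Int.dvd_antisymm (by omega) (by omega) h1 h2
  subst hqQ
  refine ⟨?_, rfl⟩
  have := mul_right_cancel₀ (by omega : q ≠ 0) hZ
  omega

lemma mat_addLeft (b1 : ℤ) (t : List ℤ) :
    mat (addLeft (b1 :: t)) =
      (2 * (mat (b1 :: t)).1 + (mat (b1 :: t)).2.1 + 2 * (mat (b1 :: t)).2.2.1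
        + (mat (b1 :: t)).2.2.2,
       -((mat (b1 :: t)).1 + (mat (b1 :: t)).2.2.1),
       2 * (mat (b1 :: t)).2.2.1 + (mat (b1 :: t)).2.2.2, -(mat (b1 :: t)).2.2.1) := by
  show mat ((b1 + 1) :: (t ++ [2])) = _
  rw [mat_cons (b1 + 1) (t ++ [2]), mat_cons b1 t, mat_append, mat_singleton, matMul]
  generalize mat t = M
  obtain ⟨P, U, Q, V⟩ := M
  dsimp only
  refine Prod.ext ?_ (Prod.ext ?_ (Prod.ext ?_ ?_)) <;> dsimp only <;> ring

lemma mat_addRight (b : List ℤ) (hb : b ≠ []) :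
    mat (addRight b) =
      (2 * ((mat b).1 - (mat b).2.1) - ((mat b).2.2.1 - (mat b).2.2.2),
       2 * (mat b).2.1 - (mat b).2.2.2, (mat b).1 - (mat b).2.1, (mat b).2.1) := by
  obtain ⟨c, s, hcs⟩ : ∃ c s, b.reverse = c :: s := by
    cases hr : b.reverse with
    | nil => exact absurd (by simpa using congrArg List.reverse hr) hb
    | cons c s => exact ⟨c, s, rfl⟩
  have hb' : b = (c :: s).reverse := by rw [← hcs, List.reverse_reverse]
  rw [addRight, hcs]
  show mat (2 :: ((c + 1) :: s).reverse) = _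
  rw [mat_cons 2 (((c + 1) :: s).reverse), mat_reverse ((c + 1) :: s), hb',
    mat_reverse (c :: s), mat_cons (c + 1) s, mat_cons c s]
  generalize mat s = M
  obtain ⟨P, U, Q, V⟩ := M
  dsimp only
  refine Prod.ext ?_ (Prod.ext ?_ (Prod.ext ?_ ?_)) <;> dsimp only <;> ring

lemma mat_of_hjcf {b : List ℤ} (hb : ∀ x ∈ b, 2 ≤ x) {d n a : ℤ}
    (hd : 1 ≤ d) (ha : 0 < a) (han : a < n)
    (hval : hjcfZ b = ((d * n ^ 2 : ℤ) : ℚ) / ((d * n * a - 1 : ℤ) : ℚ)) :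
    b ≠ [] ∧ mat b = TMat d n a := by
  have hn : 2 ≤ n := by omega
  have hdn : 2 ≤ d * n := by
    nlinarith [mul_nonneg (by omega : (0:ℤ) ≤ d - 1) (by omega : (0:ℤ) ≤ n)]
  have hQ : 0 < d * n * a - 1 := by
    nlinarith [mul_nonneg (by omega : (0:ℤ) ≤ d * n - 2) (by omega : (0:ℤ) ≤ a)]
  have hP : 0 < d * n ^ 2 := by positivity
  have hne : b ≠ [] := by
    rintro rfl
    have h0 : hjcfZ ([] : List ℤ) = 0 := by simp [hjcfZ, hjcf]
    rw [h0] at hval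
    rcases div_eq_zero_iff.mp hval.symm with h | h
    · have : (d * n ^ 2 : ℤ) = 0 := by exact_mod_cast h
      omega
    · have : (d * n * a - 1 : ℤ) = 0 := by exact_mod_cast h
      omega
  refine ⟨hne, ?_⟩
  have hpos := mat_pos b hne hb
  have hcop : IsCoprime (mat b).1 (mat b).2.2.1 :=
    ⟨(mat b).2.2.2, -(mat b).2.1, by linarith [mat_det b]⟩
  have hval' := hjcf_eq_mat b hne hb
  have hrev := mat_pos b.reverse (by simpa using hne) (by simpa using hb)
  rw [mat_reverse b] at hrev
  have hdet := mat_det b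
  obtain ⟨M, hM⟩ : ∃ M, mat b = M := ⟨mat b, rfl⟩
  obtain ⟨p, u, q, v⟩ := M
  rw [hM] at hpos hcop hval' hrev hdet
  rw [hval'] at hval
  rw [hM]
  dsimp only at hpos hcop hval hrev hdet ⊢
  obtain ⟨hq1, hqp, huv, hv0⟩ := hpos
  obtain ⟨hu1, hup, -, -⟩ := hrev
  obtain ⟨hpe, hqe⟩ := frac_eq (by omega) hQ hcop (coprime_T d n a) hval
  subst hpe; subst hqe
  have hdet₀ : d * n ^ 2 * (1 - d * a * (n - a)) -
      (d * n * a - 1) * (-(d * n * (n - a) - 1)) = 1 := by ring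
  have hdvd : (d * n ^ 2 : ℤ) ∣ (u - -(d * n * (n - a) - 1)) := by
    refine hcop.dvd_of_dvd_mul_left ⟨v - (1 - d * a * (n - a)), ?_⟩
    linear_combination hdet₀ - hdet
  have hu₀1 : 1 ≤ d * n * (n - a) - 1 := by
    nlinarith [mul_nonneg (by omega : (0:ℤ) ≤ d * n - 2) (by omega : (0:ℤ) ≤ n - a - 1)]
  have hu₀p : d * n * (n - a) - 1 < d * n ^ 2 := by
    nlinarith [mul_nonneg (by omega : (0:ℤ) ≤ d * n - 2) (by omega : (0:ℤ) ≤ a)]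
  have huu : u = -(d * n * (n - a) - 1) := by
    obtain ⟨k, hk⟩ := hdvd
    rcases lt_trichotomy k 0 with h | h | h
    · nlinarith [mul_le_mul_of_nonneg_left (by omega : k ≤ -1) (le_of_lt hP)]
    · subst h; omega
    · nlinarith [mul_le_mul_of_nonneg_left (by omega : 1 ≤ k) (le_of_lt hP)]
  have hvv : d * n ^ 2 * v = d * n ^ 2 * (1 - d * a * (n - a)) := by
    linear_combination hdet - hdet₀ + (d * n * a - 1) * huu
  have hvv' : v = 1 - d * a * (n - a) := mul_left_cancel₀ (by omega) hvv
  rw [TMat, huu, hvv']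

lemma hjcf_of_mat {b : List ℤ} (hb : ∀ x ∈ b, 2 ≤ x) (hne : b ≠ []) {d n a : ℤ}
    (hm : mat b = TMat d n a) :
    hjcfZ b = ((d * n ^ 2 : ℤ) : ℚ) / ((d * n * a - 1 : ℤ) : ℚ) := by
  rw [hjcf_eq_mat b hne hb, hm, TMat]

lemma mat_base (k : ℕ) :
    mat (List.replicate k 2 ++ [3]) =
      (2 * (k : ℤ) + 3, -((k : ℤ) + 1), 2 * (k : ℤ) + 1, -(k : ℤ)) := by
  induction k with
  | zero => norm_num [mat_singleton]
  | succ k ih =>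
    rw [List.replicate_succ, List.cons_append, mat_cons, ih]
    dsimp only
    refine Prod.ext ?_ (Prod.ext ?_ (Prod.ext ?_ ?_)) <;> dsimp only <;> push_cast <;> ring

lemma mat_base' (k : ℕ) :
    mat (3 :: (List.replicate k 2 ++ [3])) = TMat ((k : ℤ) + 2) 2 1 := by
  rw [mat_cons, mat_base k, TMat]
  dsimp only
  refine Prod.ext ?_ (Prod.ext ?_ (Prod.ext ?_ ?_)) <;> dsimp only <;> push_cast <;> ring

lemma mat_four : mat [4] = TMat 1 2 1 := by
  rw [mat_singleton, TMat]; norm_num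

lemma two_le_head (l : List ℤ) (hne : l ≠ []) (h2 : ∀ x ∈ l, 2 ≤ x) : 2 ≤ (mat l).1 := by
  obtain ⟨h1, h2', _, _⟩ := mat_pos l hne h2
  omega

lemma mat_inj : ∀ (t t' : List ℤ), (∀ x ∈ t, 2 ≤ x) → (∀ x ∈ t', 2 ≤ x) →
    mat t = mat t' → t = t' := by
  intro t
  induction t with
  | nil =>
    intro t' _ h2' h
    cases t' with
    | nil => rfl
    | cons c s' =>
      exfalso
      have h1 := two_le_head (c :: s') (by simp) h2'
      have : (mat (c :: s')).1 = (1 : ℤ) := by rw [← h]; rfl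
      omega
  | cons b s ih =>
    intro t' h2 h2' h
    cases t' with
    | nil =>
      exfalso
      have h1 := two_le_head (b :: s) (by simp) h2
      have : (mat (b :: s)).1 = (1 : ℤ) := by rw [h]; rfl
      omega
    | cons c s' =>
      have e1 : b * (mat s).1 - (mat s).2.2.1 = c * (mat s').1 - (mat s').2.2.1 := by
        rw [← mat_cons_1 b s, ← mat_cons_1 c s', h]
      have e2 : b * (mat s).2.1 - (mat s).2.2.2 = c * (mat s').2.1 - (mat s').2.2.2 := by
        rw [← mat_cons_2 b s, ← mat_cons_2 c s', h]
      have e3 : (mat s).1 = (mat s').1 := by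
        rw [← mat_cons_3 b s, ← mat_cons_3 c s', h]
      have e4 : (mat s).2.1 = (mat s').2.1 := by
        rw [← mat_cons_4 b s, ← mat_cons_4 c s', h]
      obtain ⟨hP1, hQ0, hQP⟩ := mat_bounds s (fun x hx => h2 x (List.mem_cons_of_mem _ hx))
      obtain ⟨hP1', hQ0', hQP'⟩ := mat_bounds s' (fun x hx => h2' x (List.mem_cons_of_mem _ hx))
      rw [← e3] at e1
      have hbc : b = c := by
        rcases lt_trichotomy b c with hlt | he | hgt
        · nlinarith [mul_nonneg (by omega : (0:ℤ) ≤ c - b - 1) (by omega : (0:ℤ) ≤ (mat s).1)]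
        · exact he
        · nlinarith [mul_nonneg (by omega : (0:ℤ) ≤ b - c - 1) (by omega : (0:ℤ) ≤ (mat s).1)]
      subst hbc
      have hq : (mat s).2.2.1 = (mat s').2.2.1 := by linarith
      have hv : (mat s).2.2.2 = (mat s').2.2.2 := by
        rw [e4] at e2; linarith
      have hmm : mat s = mat s' := Prod.ext e3 (Prod.ext e4 (Prod.ext hq hv))
      rw [ih s' (fun x hx => h2 x (List.mem_cons_of_mem _ hx))
        (fun x hx => h2' x (List.mem_cons_of_mem _ hx)) hmm]

lemma TMat_addLeft {b : List ℤ} {d n a : ℤ} (hne : b ≠ []) (hm : mat b = TMat d n a) :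
    mat (addLeft b) = TMat d (n + a) a := by
  cases b with
  | nil => exact absurd rfl hne
  | cons b1 t =>
    rw [mat_addLeft b1 t, hm, TMat, TMat]
    dsimp only
    refine Prod.ext ?_ (Prod.ext ?_ (Prod.ext ?_ ?_)) <;> dsimp only <;> ring

lemma TMat_addRight {b : List ℤ} {d n a : ℤ} (hne : b ≠ []) (hm : mat b = TMat d n a) :
    mat (addRight b) = TMat d (2 * n - a) n := by
  rw [mat_addRight b hne, hm, TMat, TMat]
  dsimp only
  refine Prod.ext ?_ (Prod.ext ?_ (Prod.ext ?_ ?_)) <;> dsimp only <;> ring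

lemma mem_addLeft {b : List ℤ} (h2 : ∀ x ∈ b, 2 ≤ x) : ∀ x ∈ addLeft b, 2 ≤ x := by
  cases b with
  | nil => intro x hx; simp [addLeft] at hx; omega
  | cons b1 t =>
    intro x hx
    simp [addLeft] at hx
    rcases hx with rfl | hx | rfl
    · have := h2 b1 (by simp); omega
    · exact h2 x (by simp [hx])
    · omega

lemma mem_addRight {b : List ℤ} (h2 : ∀ x ∈ b, 2 ≤ x) : ∀ x ∈ addRight b, 2 ≤ x := by
  intro x hx
  simp only [addRight, List.mem_cons, List.mem_reverse] at hx
  rcases hx with rfl | hx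
  · omega
  · cases hr : b.reverse with
    | nil => rw [hr] at hx; simp at hx
    | cons c s =>
      rw [hr] at hx
      simp only [List.modifyHead] at hx
      have hsub : ∀ y ∈ c :: s, 2 ≤ y := by
        intro y hy
        refine h2 y ?_
        rw [← List.mem_reverse, hr]
        exact hy
      rcases List.mem_cons.mp hx with rfl | hx'
      · have := hsub c (by simp); omega
      · exact hsub x (List.mem_cons_of_mem _ hx')

lemma addLeft_ne_nil (b : List ℤ) : addLeft b ≠ [] := by simp [addLeft]

lemma addRight_ne_nil (b : List ℤ) : addRight b ≠ [] := by simp [addRight]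

def Tlike (d : ℤ) (b : List ℤ) : Prop :=
  (∀ x ∈ b, 2 ≤ x) ∧ b ≠ [] ∧
    ∃ n a : ℤ, 0 < a ∧ a < n ∧ Int.gcd a n = 1 ∧ mat b = TMat d n a

lemma Tlike_step (d : ℤ) {x y : List ℤ} (h : Tlike d x) (hs : tStep x y) : Tlike d y := by
  obtain ⟨h2, hne, n, a, ha, han, hgcd, hm⟩ := h
  have hcop : IsCoprime a n := Int.isCoprime_iff_gcd_eq_one.mpr hgcd
  rcases hs with rfl | rfl
  · refine ⟨mem_addLeft h2, addLeft_ne_nil x, n + a, a, ha, by omega, ?_, TMat_addLeft hne hm⟩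
    rw [← Int.isCoprime_iff_gcd_eq_one]
    have := hcop.add_mul_left_right 1
    simpa using this
  · refine ⟨mem_addRight h2, addRight_ne_nil x, 2 * n - a, n, by omega, by omega, ?_,
      TMat_addRight hne hm⟩
    rw [← Int.isCoprime_iff_gcd_eq_one]
    have := (hcop.symm.neg_right).add_mul_left_right 2
    have h22 : -a + n * 2 = 2 * n - a := by ring
    rwa [h22] at this

lemma Tlike_reach {d : ℤ} {x y : List ℤ} (h : Tlike d x)
    (hr : Relation.ReflTransGen tStep x y) : Tlike d y := by
  induction hr with
  | refl => exact h
  | tail _ hs ih => exact Tlike_step d ih hs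

lemma Tlike_isT {d : ℤ} {b : List ℤ} (hd : 1 ≤ d) (h : Tlike d b) : IsTChain b := by
  obtain ⟨h2, hne, n, a, ha, han, hgcd, hm⟩ := h
  exact ⟨h2, d, n, a, hd, ha, han, hgcd, hjcf_of_mat h2 hne hm⟩

lemma Tlike_four : Tlike 1 [4] := by
  refine ⟨?_, by simp, 2, 1, by norm_num, by norm_num, by norm_num [Int.gcd], mat_four⟩
  intro x hx; simp at hx; omega

lemma Tlike_base (k : ℕ) : Tlike ((k : ℤ) + 2) (3 :: (List.replicate k 2 ++ [3])) := by
  refine ⟨?_, by simp, 2, 1, by norm_num, by norm_num, by norm_num [Int.gcd], mat_base' k⟩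
  intro x hx
  simp [List.mem_replicate] at hx
  rcases hx with rfl | ⟨_, rfl⟩ | rfl <;> norm_num

lemma descend : ∀ (N : ℕ) (b : List ℤ) (d n a : ℤ), n.toNat ≤ N →
    (∀ x ∈ b, 2 ≤ x) → 1 ≤ d → 0 < a → a < n → Int.gcd a n = 1 → mat b = TMat d n a →
    Relation.ReflTransGen tStep
      (if d = 1 then [4] else 3 :: (List.replicate (d - 2).toNat 2 ++ [3])) b := by
  intro N
  induction N using Nat.strong_induction_on with
  | _ N ih =>
  intro b d n a hN h2 hd ha han hgcd hm
  have hn2 : 2 ≤ n := by omega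
  have hdn : 2 ≤ d * n := by
    nlinarith [mul_nonneg (by omega : (0:ℤ) ≤ d - 1) (by omega : (0:ℤ) ≤ n)]
  have hda : 1 ≤ d * a := by nlinarith [mul_pos (by omega : (0:ℤ) < d) ha]
  have hdna : 2 ≤ d * n * a := by
    nlinarith [mul_nonneg (by omega : (0:ℤ) ≤ d * n - 2) (by omega : (0:ℤ) ≤ a - 1)]
  by_cases hn : n = 2
  · -- base case
    subst hn
    have ha1 : a = 1 := by omega
    subst ha1
    by_cases hd1 : d = 1
    · subst hd1
      rw [if_pos rfl]
      have hb4 : b = [4] := by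
        refine mat_inj b [4] h2 (by intro x hx; simp at hx; omega) ?_
        rw [hm, mat_four]
      rw [hb4]
    · rw [if_neg hd1]
      have hk : ((d - 2).toNat : ℤ) = d - 2 := Int.toNat_of_nonneg (by omega)
      have hbase := mat_base' (d - 2).toNat
      rw [hk, show d - 2 + 2 = d by ring] at hbase
      have hb : b = 3 :: (List.replicate (d - 2).toNat 2 ++ [3]) := by
        refine mat_inj b _ h2 ?_ (hm.trans hbase.symm)
        intro x hx
        simp [List.mem_replicate] at hx
        rcases hx with rfl | ⟨_, rfl⟩ | rfl <;> norm_num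
      rw [hb]
  · -- n ≥ 3: descent
    have hn3 : 3 ≤ n := by omega
    have hdna3 : 3 ≤ d * n * a := by
      nlinarith [mul_nonneg (by omega : (0:ℤ) ≤ d * a - 1) (by omega : (0:ℤ) ≤ n)]
    have hne : b ≠ [] := by
      rintro rfl
      have h1 : (mat ([] : List ℤ)).1 = (TMat d n a).1 := by rw [hm]
      have h1' : (1 : ℤ) = d * n ^ 2 := h1
      nlinarith [mul_le_mul_of_nonneg_right hdn (by omega : (0:ℤ) ≤ n)]
    obtain ⟨b1, t, rfl⟩ : ∃ b1 t, b = b1 :: t := by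
      cases b with
      | nil => exact absurd rfl hne
      | cons b1 t => exact ⟨b1, t, rfl⟩
    have ht2 : ∀ x ∈ t, 2 ≤ x := fun x hx => h2 x (List.mem_cons_of_mem _ hx)
    have hb1 : 2 ≤ b1 := h2 b1 (by simp)
    have htne : t ≠ [] := by
      rintro rfl
      have h1 : (mat [b1]).2.2.1 = (TMat d n a).2.2.1 := by rw [hm]
      have h1' : (1 : ℤ) = d * n * a - 1 := h1
      omega
    have e1 : b1 * (mat t).1 - (mat t).2.2.1 = d * n ^ 2 := by
      rw [← mat_cons_1 b1 t, hm]; rfl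
    have e3 : (mat t).1 = d * n * a - 1 := by
      rw [← mat_cons_3 b1 t, hm]; rfl
    have hexp : d * n * (n - a) = d * n ^ 2 - d * n * a := by ring
    obtain ⟨hQt1, hQtP, _, _⟩ := mat_pos t htne ht2
    -- reverse side
    have hrevm : mat ((b1 :: t).reverse) =
        (d * n ^ 2, -(d * n * a - 1), d * n * (n - a) - 1, 1 - d * a * (n - a)) := by
      rw [mat_reverse, hm]
      simp only [TMat, Prod.mk.injEq]
      exact ⟨trivial, trivial, by ring, trivial⟩
    obtain ⟨c0, s, hrev⟩ : ∃ c0 s, (b1 :: t).reverse = c0 :: s := by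
      cases hr : (b1 :: t).reverse with
      | nil => exact absurd (List.reverse_eq_nil_iff.mp hr) (by simp)
      | cons c0 s => exact ⟨c0, s, rfl⟩
    rw [hrev] at hrevm
    have hs2 : ∀ x ∈ s, 2 ≤ x := by
      intro x hx
      refine h2 x ?_
      rw [← List.mem_reverse, hrev]
      exact List.mem_cons_of_mem _ hx
    have hc0 : 2 ≤ c0 := by
      refine h2 c0 ?_
      rw [← List.mem_reverse, hrev]
      simp
    have f1 : c0 * (mat s).1 - (mat s).2.2.1 = d * n ^ 2 := by
      rw [← mat_cons_1 c0 s, hrevm]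
    have f3 : (mat s).1 = d * n * (n - a) - 1 := by
      rw [← mat_cons_3 c0 s, hrevm]
    obtain ⟨hPs1, hQs0, hQsP⟩ := mat_bounds s hs2
    have hb2 : b1 :: t = s.reverse ++ [c0] := by
      have := congrArg List.reverse hrev
      simpa using this
    rcases lt_trichotomy (2 * a) n with hlt | heqn | hgt
    · -- 2a < n : strip addLeft
      have key : 2 * (d * n * a) + 2 ≤ d * n ^ 2 := by
        nlinarith [mul_nonneg (by omega : (0:ℤ) ≤ d * n - 2) (by omega : (0:ℤ) ≤ n - 2 * a - 1)]
      have hb13 : 3 ≤ b1 := by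
        by_contra hcon
        have hb12 : b1 = 2 := by omega
        rw [hb12, e3] at e1
        omega
      have hc02 : c0 = 2 := by
        by_contra hcon
        have hc03 : 3 ≤ c0 := by omega
        have h3Ps : 3 * (mat s).1 ≤ c0 * (mat s).1 :=
          mul_le_mul_of_nonneg_right hc03 (by omega)
        rw [f3] at h3Ps f1
        omega
      subst hc02
      cases hsr : s.reverse with
      | nil =>
        exfalso
        rw [hsr] at hb2
        simp at hb2
        exact htne hb2.2
      | cons x rest =>
        rw [hsr] at hb2
        simp only [List.cons_append, List.cons.injEq] at hb2
        obtain ⟨rfl, ht⟩ := hb2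
        have hbeq : addLeft ((b1 - 1) :: rest) = b1 :: t := by
          rw [ht]
          simp only [addLeft, List.modifyHead]
          rw [sub_add_cancel, List.cons_append]
        have hrest2 : ∀ y ∈ (b1 - 1) :: rest, 2 ≤ y := by
          intro y hy
          rcases List.mem_cons.mp hy with rfl | hy'
          · omega
          · refine ht2 y ?_
            rw [ht]
            exact List.mem_append_left _ hy'
        have hL := mat_addLeft (b1 - 1) rest
        rw [hbeq, hm, TMat] at hL
        rw [Prod.ext_iff, Prod.ext_iff, Prod.ext_iff] at hL
        dsimp only at hL
        obtain ⟨g1, g2, g3, g4⟩ := hL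
        have hm' : mat ((b1 - 1) :: rest) = TMat d (n - a) a := by
          rw [TMat]
          refine Prod.ext ?_ (Prod.ext ?_ (Prod.ext ?_ ?_)) <;> dsimp only
          · linear_combination g2 - g4
          · linear_combination (-1 : ℤ) * g1 + (-2 : ℤ) * g2 + g3 + 2 * g4
          · linear_combination g4
          · linear_combination -g3 - 2 * g4
        have hgcd' : Int.gcd a (n - a) = 1 := by
          rw [← Int.isCoprime_iff_gcd_eq_one]
          have hcop : IsCoprime a n := Int.isCoprime_iff_gcd_eq_one.mpr hgcd
          have := hcop.add_mul_left_right (-1)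
          rw [show n - a = n + a * (-1) by ring]; exact this
        have step := ih (n - a).toNat (by omega) ((b1 - 1) :: rest) d (n - a) a (le_refl _)
          hrest2 hd ha (by omega) hgcd' hm'
        exact step.tail (Or.inl hbeq.symm)
    · -- 2a = n : impossible since n ≥ 3
      exfalso
      have hdvd : a ∣ n := ⟨2, by omega⟩
      have := Int.dvd_coe_gcd (dvd_refl a) hdvd
      rw [hgcd] at this
      have : a ≤ 1 := Int.le_of_dvd (by norm_num) (by exact_mod_cast this)
      omega
    · -- 2a > n : strip addRight
      have key2 : d * n ^ 2 + 2 ≤ 2 * (d * n * a) := by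
        nlinarith [mul_nonneg (by omega : (0:ℤ) ≤ d * n - 2) (by omega : (0:ℤ) ≤ 2 * a - 1 - n)]
      have hb12 : b1 = 2 := by
        by_contra hcon
        have hb13 : 3 ≤ b1 := by omega
        have h3Pt : 3 * (mat t).1 ≤ b1 * (mat t).1 :=
          mul_le_mul_of_nonneg_right hb13 (by omega)
        rw [e3] at h3Pt e1
        omega
      have hc03 : 3 ≤ c0 := by
        by_contra hcon
        have hc02' : c0 = 2 := by omega
        rw [hc02', f3] at f1
        omega
      subst hb12
      cases hsr : s.reverse with
      | nil =>
        exfalso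
        rw [hsr] at hb2
        simp at hb2
        exact htne hb2.2
      | cons x rest =>
        rw [hsr] at hb2
        simp only [List.cons_append, List.cons.injEq] at hb2
        obtain ⟨hx2, ht⟩ := hb2
        have hbeq : addRight (rest ++ [c0 - 1]) = 2 :: t := by
          rw [ht]
          simp only [addRight, List.reverse_append, List.reverse_cons, List.reverse_nil,
            List.nil_append, List.singleton_append, List.modifyHead]
          rw [sub_add_cancel]
          simp
        have hrest2 : ∀ y ∈ rest ++ [c0 - 1], 2 ≤ y := by
          intro y hy
          rcases List.mem_append.mp hy with hy' | hy'
          · refine ht2 y ?_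
            rw [ht]
            exact List.mem_append_left _ hy'
          · simp at hy'
            omega
        have hR := mat_addRight (rest ++ [c0 - 1]) (by simp)
        rw [hbeq, hm, TMat] at hR
        rw [Prod.ext_iff, Prod.ext_iff, Prod.ext_iff] at hR
        dsimp only at hR
        obtain ⟨g1, g2, g3, g4⟩ := hR
        have hm' : mat (rest ++ [c0 - 1]) = TMat d a (2 * a - n) := by
          rw [TMat]
          refine Prod.ext ?_ (Prod.ext ?_ (Prod.ext ?_ ?_)) <;> dsimp only
          · linear_combination -g3 - g4
          · linear_combination -g4
          · linear_combination g1 + g2 - 2 * g3 - 2 * g4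
          · linear_combination g2 - 2 * g4
        have hgcd' : Int.gcd (2 * a - n) a = 1 := by
          rw [← Int.isCoprime_iff_gcd_eq_one]
          have hcop : IsCoprime a n := Int.isCoprime_iff_gcd_eq_one.mpr hgcd
          have := (hcop.symm.neg_left).add_mul_left_left 2
          have h22 : -n + a * 2 = 2 * a - n := by ring
          rwa [h22] at this
        have step := ih a.toNat (by omega) (rest ++ [c0 - 1]) d a (2 * a - n) (le_refl _)
          hrest2 hd (by omega) (by omega) hgcd' hm'
        exact step.tail (Or.inr hbeq.symm)

theorem stmt3 (b : List ℤ) (h2 : ∀ x ∈ b, 2 ≤ x) :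
    (IsTChain b ↔
      ∃ start : List ℤ,
        (start = [4] ∨ ∃ k : ℕ, start = 3 :: (List.replicate k 2 ++ [3])) ∧
          Relation.ReflTransGen tStep start b) ∧
    (∀ d n a : ℤ, 1 ≤ d → 0 < a → a < n → Int.gcd a n = 1 →
      hjcfZ b = ((d * n ^ 2 : ℤ) : ℚ) / ((d * n * a - 1 : ℤ) : ℚ) →
      Relation.ReflTransGen tStep
        (if d = 1 then [4] else 3 :: (List.replicate (d - 2).toNat 2 ++ [3])) b) := by
  constructor
  · constructor
    · rintro ⟨-, d, n, a, hd, ha, han, hgcd, hval⟩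
      obtain ⟨hne, hm⟩ := mat_of_hjcf h2 hd ha han hval
      refine ⟨if d = 1 then [4] else 3 :: (List.replicate (d - 2).toNat 2 ++ [3]), ?_, ?_⟩
      · by_cases hd1 : d = 1
        · rw [if_pos hd1]; exact Or.inl rfl
        · rw [if_neg hd1]; exact Or.inr ⟨(d - 2).toNat, rfl⟩
      · exact descend n.toNat b d n a (le_refl _) h2 hd ha han hgcd hm
    · rintro ⟨start, hshape, hreach⟩
      rcases hshape with rfl | ⟨k, rfl⟩
      · exact Tlike_isT (by norm_num) (Tlike_reach Tlike_four hreach)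
      · exact Tlike_isT (by omega) (Tlike_reach (Tlike_base k) hreach)
  · intro d n a hd ha han hgcd hval
    obtain ⟨hne, hm⟩ := mat_of_hjcf h2 hd ha han hval
    exact descend n.toNat b d n a (le_refl _) h2 hd ha han hgcd hm
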